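/- For k ≥ 2, the number of minimal paths (with ordered endpoints identified with their reverses) in G_k is at least k!/2. -/

import Mathlib

open Classical in
/-- Vertex type of the bipartite graph `G k`: `V1 = Fin k` plus `V2` = unordered
pairs of distinct elements of `V1`. -/
abbrev GVert (k : ℕ) := Fin k ⊕ {p : Sym2 (Fin k) // ¬ p.IsDiag}

/-- The bipartite graph `G k`: `a ∈ V1` is adjacent to `p ∈ V2` iff `a ∈ p`. -/
def biG (k : ℕ) : SimpleGraph (GVert k) where
  Adj x y := ∃ (a : Fin k) (p : {p : Sym2 (Fin k) // ¬ p.IsDiag}),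
    a ∈ p.val ∧ ((x = Sum.inl a ∧ y = Sum.inr p) ∨ (x = Sum.inr p ∧ y = Sum.inl a))
  symm := by refine ⟨?_⟩; rintro x y ⟨a, p, hm, (⟨rfl, rfl⟩ | ⟨rfl, rfl⟩)⟩ <;> exact ⟨a, p, hm, by tauto⟩
  loopless := by refine ⟨?_⟩; rintro x ⟨a, p, hm, (⟨rfl, h⟩ | ⟨rfl, h⟩)⟩ <;> simp_all

/-- The `V2`-vertex `{a,b}` (junk value `inl a` if `a = b`). -/
def pairV {k : ℕ} (a b : Fin k) : GVert k :=
  if h : a = b then Sum.inl a else Sum.inr ⟨s(a, b), by simp [h]⟩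

/-- The alternating list of vertices `a₁, {a₁,a₂}, a₂, …` associated to a list in `V1`. -/
def altList {k : ℕ} : List (Fin k) → List (GVert k)
  | [] => []
  | [a] => [Sum.inl a]
  | a :: b :: rest => Sum.inl a :: pairV a b :: altList (b :: rest)

lemma mem_altList {k : ℕ} (as : List (Fin k)) (x : GVert k) (hx : x ∈ altList as) :
    (∃ c ∈ as, x = Sum.inl c) ∨ ∃ p, x = Sum.inr p ∧ ∀ e ∈ p.1, e ∈ as := by
  induction as using altList.induct with
  | case1 => simp [altList] at hx
  | case2 a => simp [altList] at hx; exact Or.inl ⟨a, by simp, hx⟩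
  | case3 a b rest ih =>
    simp only [altList, List.mem_cons] at hx
    rcases hx with rfl | rfl | hx
    · exact Or.inl ⟨a, by simp, rfl⟩
    · by_cases h : a = b
      · exact Or.inl ⟨a, by simp, by simp [pairV, h]⟩
      · refine Or.inr ⟨⟨s(a,b), by simp [h]⟩, by simp [pairV, h], ?_⟩
        intro e he; rcases Sym2.mem_iff.mp he with rfl | rfl <;> simp
    · rcases ih hx with ⟨c, hc, rfl⟩ | ⟨p, rfl, hp⟩
      · exact Or.inl ⟨c, by simp [hc], rfl⟩
      · exact Or.inr ⟨p, rfl, fun e he => by simpa using Or.inr (hp e he)⟩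

lemma head?_altList {k : ℕ} (as : List (Fin k)) :
    (altList as).head? = as.head?.map Sum.inl := by
  induction as using altList.induct <;> simp [altList]
lemma altList_ne_nil {k : ℕ} (a : Fin k) (as : List (Fin k)) : altList (a :: as) ≠ [] := by
  cases as <;> simp [altList]

lemma getLast?_altList {k : ℕ} (as : List (Fin k)) :
    (altList as).getLast? = as.getLast?.map Sum.inl := by
  induction as using altList.induct with
  | case1 => simp [altList]
  | case2 a => simp [altList]
  | case3 a b rest ih =>
    rw [altList, List.getLast?_cons_cons]
    rcases hM : altList (b :: rest) with _ | ⟨m, ms⟩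
    · exact absurd hM (altList_ne_nil b rest)
    · rw [hM] at ih; rw [List.getLast?_cons_cons, ih]
      cases rest <;> simp

lemma pairV_ne {k : ℕ} {a b : Fin k} (h : a ≠ b) :
    pairV a b = Sum.inr ⟨s(a,b), by simp [h]⟩ := dif_neg h

lemma adj_pairV_left {k : ℕ} {a b : Fin k} (h : a ≠ b) : (biG k).Adj (Sum.inl a) (pairV a b) := by
  refine ⟨a, ⟨s(a,b), by simp [h]⟩, by simp, Or.inl ⟨rfl, by simp [pairV, h]⟩⟩

lemma adj_pairV_right {k : ℕ} {a b : Fin k} (h : a ≠ b) : (biG k).Adj (pairV a b) (Sum.inl b) := by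
  refine ⟨b, ⟨s(a,b), by simp [h]⟩, by simp, Or.inr ⟨by simp [pairV, h], rfl⟩⟩

lemma chain'_altList {k : ℕ} (as : List (Fin k)) (h : as.Nodup) :
    List.Chain' (biG k).Adj (altList as) := by
  induction as using altList.induct with
  | case1 => simp [altList]; exact List.isChain_nil
  | case2 a => simp [altList]; exact List.isChain_singleton _
  | case3 a b rest ih =>
    have hab : a ≠ b := by simp at h; tauto
    have hc := ih (h.of_cons)
    rw [altList]
    refine List.IsChain.cons_cons (adj_pairV_left hab) ?_
    rcases hM : altList (b :: rest) with _ | ⟨m, ms⟩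
    · exact absurd hM (altList_ne_nil b rest)
    · have hm : m = Sum.inl b := by
        have := head?_altList (b :: rest); rw [hM] at this; simpa using this
      rw [hM] at hc
      exact List.IsChain.cons_cons (hm ▸ adj_pairV_right hab) hc

lemma nodup_altList {k : ℕ} (as : List (Fin k)) (h : as.Nodup) :
    (altList as).Nodup := by
  induction as using altList.induct with
  | case1 => simp [altList]
  | case2 a => simp [altList]
  | case3 a b rest ih =>
    have ha : a ∉ b :: rest := by simp at h ⊢; tauto
    have hab : a ≠ b := fun e => ha (e ▸ List.mem_cons_self (a := b) (l := rest))
    rw [altList]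
    refine List.nodup_cons.mpr ⟨?_, List.nodup_cons.mpr ⟨?_, ih h.of_cons⟩⟩
    · intro h1
      rw [List.mem_cons] at h1
      rcases h1 with h1 | h2
      · rw [pairV_ne hab] at h1; simp at h1
      · rcases mem_altList _ _ h2 with ⟨c, hc, he⟩ | ⟨p, he, _⟩
        · exact ha (Sum.inl.inj he ▸ hc)
        · simp at he
    · intro h2
      rcases mem_altList _ _ h2 with ⟨c, hc, he⟩ | ⟨p, he, hp⟩
      · rw [pairV_ne hab] at he; simp at he
      · have : a ∈ p.1 := by rw [pairV_ne hab] at he; rw [← Sum.inr.inj he]; simp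
        exact ha (hp a this)

lemma inl_mem_altList {k : ℕ} {as : List (Fin k)} {c : Fin k}
    (h : Sum.inl c ∈ altList as) : c ∈ as := by
  rcases mem_altList as _ h with ⟨d, hd, he⟩ | ⟨p, he, _⟩
  · exact Sum.inl.inj he ▸ hd
  · simp at he

lemma inr_mem_altList {k : ℕ} {as : List (Fin k)} {p : {p : Sym2 (Fin k) // ¬ p.IsDiag}}
    (h : Sum.inr p ∈ altList as) : ∀ e ∈ p.1, e ∈ as := by
  rcases mem_altList as _ h with ⟨d, hd, he⟩ | ⟨p', he, hp⟩
  · simp at he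
  · rw [Sum.inr.inj he]; exact hp

lemma altList_min {k : ℕ} (as : List (Fin k)) (h : as.Nodup) :
    ∀ L' : List (GVert k), L'.Sublist (altList as) → L'.head? = (altList as).head? →
      L'.getLast? = (altList as).getLast? → List.Chain' (biG k).Adj L' → L' = altList as := by
  induction as using altList.induct with
  | case1 => intro L' hsub _ _ _; simpa [altList] using List.sublist_nil.mp (by simpa [altList] using hsub)
  | case2 a =>
    intro L' hsub hh _ _
    rcases List.sublist_singleton.mp (by simpa [altList] using hsub) with rfl | rfl
    · simp [altList] at hh
    · rfl
  | case3 a b rest ih =>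
    intro L' hsub hh hl hc
    have ha : a ∉ b :: rest := by simp at h ⊢; tauto
    have hab : a ≠ b := fun e => ha (e ▸ List.mem_cons_self (a := b) (l := rest))
    have hne : (b :: rest) ≠ [] := List.cons_ne_nil _ _
    set c0 := (b :: rest).getLast hne with hc0def
    have hc0 : (b :: rest).getLast? = some c0 := List.getLast?_eq_getLast hne
    have hc0m : c0 ∈ b :: rest := List.getLast_mem hne
    have hLlast : (altList (a :: b :: rest)).getLast? = some (Sum.inl c0) := by
      rw [getLast?_altList, List.getLast?_cons_cons, hc0]; rfl
    have hMlast : (altList (b :: rest)).getLast? = some (Sum.inl c0) := by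
      rw [getLast?_altList, hc0]; rfl
    rcases L' with _ | ⟨x, T⟩
    · simp [altList] at hh
    · have hx : x = Sum.inl a := by
        rw [head?_altList] at hh; simpa using hh
      subst hx
      rw [altList] at hsub ⊢
      have hT : T.Sublist (pairV a b :: altList (b :: rest)) :=
        List.cons_sublist_cons.mp hsub
      rcases T with _ | ⟨u, T2⟩
      · exfalso
        rw [hLlast] at hl
        simp at hl
        exact ha (hl ▸ hc0m)
      · have hadj : (biG k).Adj (Sum.inl a) u := (List.isChain_cons_cons.mp hc).1
        obtain ⟨a', p, hm, hdisj⟩ := hadj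
        rcases hdisj with ⟨he1, rfl⟩ | ⟨he1, _⟩
        · have hma : a ∈ p.1 := by rw [Sum.inl.inj he1]; exact hm
          have humem : Sum.inr p ∈ pairV a b :: altList (b :: rest) :=
            hT.subset (List.mem_cons_self)
          have hu : Sum.inr p = pairV a b := by
            rcases List.mem_cons.mp humem with he | he
            · exact he
            · exact absurd (inr_mem_altList he a hma) ha
          have hps : p.1 = s(a, b) := by
            have := Sum.inr.inj (hu.trans (pairV_ne hab))
            rw [this]
          rw [← hu] at hT
          have hT2 : T2.Sublist (altList (b :: rest)) := List.cons_sublist_cons.mp hT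
          rcases T2 with _ | ⟨v, T3⟩
          · exfalso
            rw [hLlast] at hl
            simp at hl
          · have hadj2 : (biG k).Adj (Sum.inr p) v := (List.isChain_cons_cons.mp hc.tail).1
            obtain ⟨a2, p2, hm2, hdisj2⟩ := hadj2
            rcases hdisj2 with ⟨he1, _⟩ | ⟨he1, rfl⟩
            · simp at he1
            · have ha2m : a2 ∈ p.1 := by rw [Sum.inr.inj he1]; exact hm2
              have ha2 : a2 = a ∨ a2 = b := by rw [hps] at ha2m; simpa using ha2m
              have hvmem : Sum.inl a2 ∈ altList (b :: rest) :=
                hT2.subset (List.mem_cons_self)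
              have ha2b : a2 = b := by
                rcases ha2 with rfl | rfl
                · exact absurd (inl_mem_altList hvmem) ha
                · rfl
              subst ha2b
              have hkey : (Sum.inl a2 :: T3) = altList (a2 :: rest) := by
                refine ih h.of_cons _ hT2 ?_ ?_ (hc.tail.tail)
                · rw [head?_altList]; simp
                · rw [hLlast] at hl
                  rw [List.getLast?_cons_cons, List.getLast?_cons_cons] at hl
                  rw [hl, hMlast]
              rw [hkey, hu]
        · simp at he1

/-- The alternating path associated to a permutation of `Fin k`. -/
def permPath {k : ℕ} (σ : Equiv.Perm (Fin k)) : List (GVert k) :=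
  altList ((List.finRange k).map σ)

/-- `L` is a path: consecutive vertices adjacent and no repeats. -/
def IsPathList {V : Type*} (G : SimpleGraph V) (L : List V) : Prop :=
  List.Chain' G.Adj L ∧ L.Nodup

/-- `L` is a minimal path: no proper subsequence with the same endpoints is a path. -/
def IsMinimalPath {V : Type*} (G : SimpleGraph V) (L : List V) : Prop :=
  IsPathList G L ∧ ∀ L' : List V, L'.Sublist L → L'.head? = L.head? →
    L'.getLast? = L.getLast? → IsPathList G L' → L' = L

lemma filterMap_altList {k : ℕ} (as : List (Fin k)) (h : as.Nodup) :
    (altList as).filterMap Sum.getLeft? = as := by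
  induction as using altList.induct with
  | case1 => simp [altList]
  | case2 a => simp [altList]
  | case3 a b rest ih =>
    have hab : a ≠ b := by simp at h; tauto
    rw [altList, List.filterMap_cons, List.filterMap_cons, pairV_ne hab]
    simpa using ih h.of_cons

lemma nodup_mapPerm {k : ℕ} (σ : Equiv.Perm (Fin k)) : ((List.finRange k).map σ).Nodup :=
  (List.nodup_finRange k).map σ.injective

lemma permPath_inj {k : ℕ} : Function.Injective (permPath (k := k)) := by
  intro σ τ hst
  have h1 : ((List.finRange k).map σ) = ((List.finRange k).map τ) := by
    have := congrArg (List.filterMap Sum.getLeft?) hst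
    rw [permPath, permPath] at this
    rwa [filterMap_altList _ (nodup_mapPerm σ), filterMap_altList _ (nodup_mapPerm τ)] at this
  exact Equiv.ext fun i => List.map_inj_left.mp h1 i (List.mem_finRange i)

lemma permPath_minimal {k : ℕ} (σ : Equiv.Perm (Fin k)) :
    IsMinimalPath (biG k) (permPath σ) := by
  refine ⟨⟨chain'_altList _ (nodup_mapPerm σ), nodup_altList _ (nodup_mapPerm σ)⟩, ?_⟩
  intro L' hs hh hl hp
  exact altList_min _ (nodup_mapPerm σ) L' hs hh hl hp.1

theorem stmt6 (k : ℕ) (hk : 2 ≤ k) :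
    k.factorial / 2 ≤
      Set.ncard ((fun L => ({L, L.reverse} : Set (List (GVert k)))) ''
        {L : List (GVert k) | IsMinimalPath (biG k) L}) := by
  classical
  set f : List (GVert k) → Set (List (GVert k)) := fun L => ({L, L.reverse} : Set _) with hf
  set S : Set (List (GVert k)) := {L | IsMinimalPath (biG k) L} with hS
  have hSfin : S.Finite := by
    refine Set.Finite.subset (List.finite_length_le (GVert k) (Fintype.card (GVert k))) ?_
    intro L hL
    exact hL.1.2.length_le_card
  have hfin : (f '' S).Finite := hSfin.image f
  set g : Equiv.Perm (Fin k) → Set (List (GVert k)) := fun σ => f (permPath σ) with hg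
  have hsubset : ↑(Finset.image g Finset.univ) ⊆ f '' S := by
    intro y hy
    simp only [Finset.coe_image, Set.mem_image, Finset.mem_coe] at hy ⊢
    obtain ⟨σ, _, rfl⟩ := hy
    exact ⟨permPath σ, permPath_minimal σ, rfl⟩
  have hcard : k.factorial ≤ 2 * (Finset.image g Finset.univ).card := by
    have := Finset.card_le_mul_card_image (f := g) Finset.univ 2 ?_
    · calc k.factorial = Fintype.card (Equiv.Perm (Fin k)) := by
            rw [Fintype.card_perm, Fintype.card_fin]
        _ = Finset.univ.card := (Finset.card_univ).symm
        _ ≤ 2 * (Finset.image g Finset.univ).card := this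
    · intro y hy
      obtain ⟨σ₀, _, rfl⟩ := Finset.mem_image.mp hy
      refine le_trans (Finset.card_le_card_of_injOn
        (t := ({permPath σ₀, (permPath σ₀).reverse} : Finset (List (GVert k))))
        permPath ?_ permPath_inj.injOn)
        (le_trans (Finset.card_insert_le _ _) (by simp))
      intro σ hσ
      have hgs : g σ = g σ₀ := (Finset.mem_filter.mp hσ).2
      have hmem : permPath σ ∈ g σ := Set.mem_insert _ _
      rw [hgs] at hmem
      have hmem' : permPath σ = permPath σ₀ ∨ permPath σ = (permPath σ₀).reverse := hmem
      simp only [Finset.mem_coe, Finset.mem_insert, Finset.mem_singleton]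
      exact hmem'
  have h2 : k.factorial / 2 ≤ (Finset.image g Finset.univ).card :=
    Nat.div_le_of_le_mul hcard
  refine le_trans h2 ?_
  rw [← Set.ncard_coe_finset]
  exact Set.ncard_le_ncard hsubset hfin
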